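/- With L as above, there is a bijection between primitive vectors x ∈ L/{±1} of length Q(x) = D > 0 and optimal embeddings φ: 𝒪_D → 𝒪_M of the real quadratic order of discriminant D, up to Galois conjugation: from x one takes φ(𝒪_D) = ℤ⟨1, (1+x)/2⟩ if x ∉ 2L_M and ℤ⟨1, x/2⟩ if x ∈ 2L_M; from φ one takes x = ±φ(√D). -/

import Mathlib

noncomputable section

open Quaternion

/-- An order in the quaternion algebra `B = (a,b)_ℚ`: a `ℤ`-subalgebra which is finitely
generated as a `ℤ`-module and spans `B` over `ℚ`. -/
def IsOrder (a b : ℚ) (O : Subalgebra ℤ ℍ[ℚ, a, b]) : Prop :=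
  (Subalgebra.toSubmodule O).FG ∧ ∀ x : ℍ[ℚ, a, b], ∃ n : ℤ, n ≠ 0 ∧ n • x ∈ O

/-- A maximal order. -/
def IsMaximalOrder (a b : ℚ) (O : Subalgebra ℤ ℍ[ℚ, a, b]) : Prop :=
  IsOrder a b O ∧ ∀ O' : Subalgebra ℤ ℍ[ℚ, a, b], IsOrder a b O' → O ≤ O' → O' = O

/-- An Eichler order: the intersection of two maximal orders. -/
def IsEichlerOrder (a b : ℚ) (O : Subalgebra ℤ ℍ[ℚ, a, b]) : Prop :=
  ∃ O₁ O₂ : Subalgebra ℤ ℍ[ℚ, a, b],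
    IsMaximalOrder a b O₁ ∧ IsMaximalOrder a b O₂ ∧ O = O₁ ⊓ O₂

/-- `Q(x) = -N(x) = x²` on trace-zero elements, where `N(x) = x·x̄` is the reduced norm. -/
def Qq (a b : ℚ) (x : ℍ[ℚ, a, b]) : ℚ := -((x * star x).re)

/-- `L_𝔐 = 𝒪_𝔐 ∩ V`, the lattice of trace-zero elements of the order `O`. -/
def LMset (a b : ℚ) (O : Subalgebra ℤ ℍ[ℚ, a, b]) : Set ℍ[ℚ, a, b] :=
  {x | x.re = 0 ∧ x ∈ O}

/-- the sublattice `L := 2L_𝔐 ∪ {λ ∈ L_𝔐 : (1+λ)/2 ∈ 𝒪_𝔐}`. -/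
def Lset (a b : ℚ) (O : Subalgebra ℤ ℍ[ℚ, a, b]) : Set ℍ[ℚ, a, b] :=
  {x | (∃ y ∈ LMset a b O, x = 2 • y) ∨
    (x ∈ LMset a b O ∧ (1 / 2 : ℚ) • (1 + x) ∈ O)}

/-- `x` is a primitive vector of the lattice (set) `A`: it lies in `A` and is not a proper
integer multiple of a vector of `A`. -/
def IsPrimitiveIn (a b : ℚ) (A : Set ℍ[ℚ, a, b]) (x : ℍ[ℚ, a, b]) : Prop :=
  x ∈ A ∧ ∀ n : ℤ, ∀ y ∈ A, x = n • y → IsUnit n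

/-- `S` is the image of an optimal embedding into `O` of the (real) quadratic order of
discriminant `D`: it is generated as a `ℤ`-module by `1` and an element `w` with
`tr(w)² - 4N(w) = D`, it is contained in `O`, and it equals the intersection of `O` with the
rational quadratic subalgebra `ℚ·1 + ℚ·w` (optimality: it cannot be extended to a strictly
larger order of that quadratic field inside `O`). -/
def IsOptimalEmbImage (a b : ℚ) (O S : Subalgebra ℤ ℍ[ℚ, a, b]) (D : ℤ) : Prop :=
  ∃ w : ℍ[ℚ, a, b],
    ((S : Set ℍ[ℚ, a, b]) = {z | ∃ m n : ℤ, z = m • (1 : ℍ[ℚ, a, b]) + n • w}) ∧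
    (2 * w.re) ^ 2 - 4 * ((w * star w).re) = (D : ℚ) ∧
    S ≤ O ∧
    (∀ z ∈ O, (∃ p q : ℚ, z = p • (1 : ℍ[ℚ, a, b]) + q • w) → z ∈ S)


open Polynomial

section Aux
variable {a b : ℚ}

lemma quat_identity (x : ℍ[ℚ,a,b]) :
    x * x - (2*x.re) • x + ((x * star x).re) • (1:ℍ[ℚ,a,b]) = 0 := by
  ext <;> simp [QuaternionAlgebra.re_mul, QuaternionAlgebra.imI_mul,
    QuaternionAlgebra.imJ_mul, QuaternionAlgebra.imK_mul] <;> ring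

lemma degree_le_one_of_lt_two {d : WithBot ℕ} (h : d < 2) : d ≤ 1 := by
  cases d with
  | bot => exact bot_le
  | coe n =>
    exact WithBot.coe_le_coe.mpr (Nat.lt_succ_iff.mp (WithBot.coe_lt_coe.mp h))

lemma trace_norm_int {O1 : Subalgebra ℤ ℍ[ℚ,a,b]} (hFG : (Subalgebra.toSubmodule O1).FG)
    {z : ℍ[ℚ,a,b]} (hz : z ∈ O1) (him : z.im ≠ 0) :
    (∃ t : ℤ, (t:ℚ) = 2*z.re) ∧ ∃ n : ℤ, (n:ℚ) = (z * star z).re := by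
  obtain ⟨f, hfm, hf0⟩ := IsIntegral.of_mem_of_fg O1 hFG z hz
  set t : ℚ := 2*z.re with ht
  set n : ℚ := (z * star z).re with hn
  set q : ℚ[X] := X^2 + (C (-t) * X + C n) with hq
  have hqm : q.Monic := by
    rw [hq]
    apply (monic_X_pow 2).add_of_left
    apply lt_of_le_of_lt (degree_add_le _ _)
    simp only [degree_X_pow]
    apply max_lt
    · exact lt_of_le_of_lt (degree_C_mul_X_le _) (by norm_num)
    · exact lt_of_le_of_lt (degree_C_le) (by norm_num)
  have hqz : aeval z q = 0 := by
    have h0 := quat_identity z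
    simp only [hq, map_add, map_mul, map_pow, aeval_X, aeval_C, map_neg]
    simp only [Algebra.algebraMap_eq_smul_one]
    rw [pow_two, neg_mul, smul_mul_assoc, one_mul]
    rw [← ht, ← hn] at h0
    linear_combination (norm := module) h0
  have hfmap : aeval z (f.map (algebraMap ℤ ℚ)) = 0 := by
    rw [aeval_map_algebraMap]; exact hf0
  set r : ℚ[X] := f.map (algebraMap ℤ ℚ) %ₘ q with hr
  have hdeg : r.degree < 2 := by
    have h1 := degree_modByMonic_lt (f.map (algebraMap ℤ ℚ)) hqm
    have hdq : q.degree = 2 := by rw [hq]; compute_degree!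
    rwa [hdq] at h1
  have hrz : aeval z r = 0 := by
    have hdiv := modByMonic_add_div (f.map (algebraMap ℤ ℚ)) q
    have h2 := congrArg (aeval z) hdiv
    rw [map_add, map_mul, hqz, zero_mul, add_zero] at h2
    rw [← hr] at h2; rw [h2]; exact hfmap
  have hre : r = C (r.coeff 1) * X + C (r.coeff 0) :=
    eq_X_add_C_of_degree_le_one (degree_le_one_of_lt_two hdeg)
  have hlin : (r.coeff 1) • z + (r.coeff 0) • (1:ℍ[ℚ,a,b]) = 0 := by
    have h3 := hrz
    rw [hre] at h3
    simpa [Algebra.algebraMap_eq_smul_one, smul_mul_assoc] using h3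
  have hc1 : r.coeff 1 = 0 := by
    by_contra hne
    apply him
    have h1 : (r.coeff 1) • z = (-(r.coeff 0)) • (1:ℍ[ℚ,a,b]) := by
      rw [neg_smul]; linear_combination (norm := module) hlin
    have hI := congrArg QuaternionAlgebra.imI h1
    have hJ := congrArg QuaternionAlgebra.imJ h1
    have hK := congrArg QuaternionAlgebra.imK h1
    simp only [QuaternionAlgebra.imI_smul, QuaternionAlgebra.imJ_smul,
      QuaternionAlgebra.imK_smul, QuaternionAlgebra.imI_one, QuaternionAlgebra.imJ_one,
      QuaternionAlgebra.imK_one, smul_eq_mul, mul_zero] at hI hJ hK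
    have hI' : z.imI = 0 := by
      have := mul_eq_zero.mp hI; tauto
    have hJ' : z.imJ = 0 := by
      have := mul_eq_zero.mp hJ; tauto
    have hK' : z.imK = 0 := by
      have := mul_eq_zero.mp hK; tauto
    ext <;> simp [hI', hJ', hK']
  have hc0 : r.coeff 0 = 0 := by
    rw [hc1, zero_smul, zero_add] at hlin
    by_contra hne
    have h4 := congrArg QuaternionAlgebra.re hlin
    simp [hne] at h4
  have hr0 : r = 0 := by rw [hre, hc1, hc0]; simp
  have hdvd : q ∣ f.map (algebraMap ℤ ℚ) := (modByMonic_eq_zero_iff_dvd hqm).mp hr0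
  obtain ⟨g', hg'⟩ := IsIntegrallyClosed.eq_map_mul_C_of_dvd (K := ℚ) hfm hdvd
  rw [hqm.leadingCoeff, map_one, mul_one] at hg'
  constructor
  · refine ⟨-(g'.coeff 1), ?_⟩
    have h5 := congrArg (fun p => p.coeff 1) hg'
    simp [hq, coeff_C] at h5
    push_cast
    rw [h5]; ring
  · refine ⟨g'.coeff 0, ?_⟩
    have h6 := congrArg (fun p => p.coeff 0) hg'
    simp [hq, coeff_C] at h6
    exact h6

-- rational scalar in FG order is an integer
lemma rat_int {O1 : Subalgebra ℤ ℍ[ℚ,a,b]} (hFG : (Subalgebra.toSubmodule O1).FG)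
    {c : ℚ} (hc : algebraMap ℚ ℍ[ℚ,a,b] c ∈ O1) : ∃ m : ℤ, (m : ℚ) = c := by
  have hint : IsIntegral ℤ (algebraMap ℚ ℍ[ℚ,a,b] c) :=
    IsIntegral.of_mem_of_fg O1 hFG _ hc
  have hinj : Function.Injective (algebraMap ℚ ℍ[ℚ,a,b]) := RingHom.injective _
  have : IsIntegral ℤ c := (isIntegral_algebraMap_iff hinj).mp hint
  exact IsIntegrallyClosed.isIntegral_iff.mp this


-- pure quaternion facts
lemma pure_star {x : ℍ[ℚ,a,b]} (h : x.re = 0) : star x = -x := by ext <;> simp [h]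

lemma im_eq_self {x : ℍ[ℚ,a,b]} (h : x.re = 0) : x.im = x := by ext <;> simp [h.symm]

lemma pure_sq {x : ℍ[ℚ,a,b]} (h : x.re = 0) : x * x = (Qq a b x) • (1:ℍ[ℚ,a,b]) := by
  unfold Qq
  ext <;> simp [QuaternionAlgebra.re_mul, QuaternionAlgebra.imI_mul,
    QuaternionAlgebra.imJ_mul, QuaternionAlgebra.imK_mul, h] <;> ring

-- the span set
def Sset (w : ℍ[ℚ,a,b]) : Set ℍ[ℚ,a,b] :=
  {z | ∃ m n : ℤ, z = m • (1:ℍ[ℚ,a,b]) + n • w}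

lemma zsmul_eq_qsmul (n : ℤ) (v : ℍ[ℚ,a,b]) : n • v = ((n:ℚ)) • v :=
  (Int.cast_smul_eq_zsmul ℚ n v).symm

lemma span_mul {w : ℍ[ℚ,a,b]} {c d : ℚ} (hw : w*w = c • (1:ℍ[ℚ,a,b]) + d • w) (p q p' q' : ℚ) :
    (p • (1:ℍ[ℚ,a,b]) + q • w) * (p' • 1 + q' • w)
      = (p*p'+q*q'*c) • 1 + (p*q'+q*p'+q*q'*d) • w := by
  have h : (p • (1:ℍ[ℚ,a,b]) + q • w) * (p' • 1 + q' • w)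
      = (p*p') • 1 + (p*q'+q*p') • w + (q*q') • (w*w) := by
    simp only [mul_add, add_mul, smul_mul_assoc, mul_smul_comm, one_mul, mul_one, smul_smul]
    module
  rw [h, hw]
  module

def SpanAlg (w : ℍ[ℚ,a,b]) (c d : ℤ) (hw : w*w = (c:ℚ) • (1:ℍ[ℚ,a,b]) + (d:ℚ) • w) :
    Subalgebra ℤ ℍ[ℚ,a,b] where
  carrier := Sset w
  mul_mem' := by
    rintro u v ⟨m, n, rfl⟩ ⟨m', n', rfl⟩
    refine ⟨m*m'+n*n'*c, m*n'+n*m'+n*n'*d, ?_⟩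
    simp only [zsmul_eq_qsmul]
    push_cast
    exact span_mul hw _ _ _ _
  add_mem' := by
    rintro u v ⟨m, n, rfl⟩ ⟨m', n', rfl⟩
    exact ⟨m+m', n+n', by simp only [add_smul]; abel⟩
  algebraMap_mem' := fun k => ⟨k, 0, by simp [Algebra.algebraMap_eq_smul_one]⟩

lemma SpanAlg_coe (w : ℍ[ℚ,a,b]) (c d : ℤ) (hw) :
    ((SpanAlg w c d hw : Subalgebra ℤ ℍ[ℚ,a,b]) : Set ℍ[ℚ,a,b]) = Sset w := rfl

lemma Sset_shift (k : ℤ) (w : ℍ[ℚ,a,b]) : Sset (k • (1:ℍ[ℚ,a,b]) + w) = Sset w := by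
  ext z
  constructor
  · rintro ⟨m, n, rfl⟩
    exact ⟨m + n*k, n, by simp only [smul_add, smul_smul]; rw [add_smul]; abel⟩
  · rintro ⟨m, n, rfl⟩
    exact ⟨m - n*k, n, by simp only [smul_add, smul_smul, sub_smul]; abel⟩

lemma Sset_neg (w : ℍ[ℚ,a,b]) : Sset (-w) = Sset w := by
  ext z
  constructor
  · rintro ⟨m, n, rfl⟩; exact ⟨m, -n, by simp⟩
  · rintro ⟨m, n, rfl⟩; exact ⟨m, -n, by simp⟩

lemma nat2smul (y : ℍ[ℚ,a,b]) : 2 • y = (2:ℚ) • y := by rw [two_smul, two_smul]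

variable (O : Subalgebra ℤ ℍ[ℚ,a,b])

lemma LM_add {u v : ℍ[ℚ,a,b]} (hu : u ∈ LMset a b O) (hv : v ∈ LMset a b O) :
    u + v ∈ LMset a b O := ⟨by simp [hu.1, hv.1], add_mem hu.2 hv.2⟩

lemma LM_zsmul (k : ℤ) {v : ℍ[ℚ,a,b]} (hv : v ∈ LMset a b O) : k • v ∈ LMset a b O := by
  refine ⟨?_, zsmul_mem hv.2 k⟩
  rw [zsmul_eq_qsmul]; simp [hv.1]

lemma LM_sub {u v : ℍ[ℚ,a,b]} (hu : u ∈ LMset a b O) (hv : v ∈ LMset a b O) :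
    u - v ∈ LMset a b O := by
  have := LM_add O hu (LM_zsmul O (-1) hv)
  simpa [sub_eq_add_neg] using this

lemma L_mem_LM {x : ℍ[ℚ,a,b]} (hx : x ∈ Lset a b O) : x ∈ LMset a b O := by
  rcases hx with ⟨y, hy, rfl⟩ | ⟨h, -⟩
  · rw [nat2smul]
    exact ⟨by simp [hy.1], by
      have : (2:ℚ) • y = y + y := two_smul _ y
      rw [this]; exact add_mem hy.2 hy.2⟩
  · exact h

lemma L_add {u v : ℍ[ℚ,a,b]} (hu : u ∈ Lset a b O) (hv : v ∈ Lset a b O) :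
    u + v ∈ Lset a b O := by
  rcases hu with ⟨y, hy, rfl⟩ | ⟨hu1, hu2⟩
  · rcases hv with ⟨y', hy', rfl⟩ | ⟨hv1, hv2⟩
    · exact Or.inl ⟨y + y', LM_add O hy hy', by rw [smul_add]⟩
    · refine Or.inr ⟨LM_add O (L_mem_LM O (Or.inl ⟨y, hy, rfl⟩)) hv1, ?_⟩
      have : (1/2:ℚ) • (1 + (2 • y + v)) = (1/2:ℚ) • (1 + v) + y := by
        rw [nat2smul]; module
      rw [this]; exact add_mem hv2 hy.2
  · rcases hv with ⟨y', hy', rfl⟩ | ⟨hv1, hv2⟩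
    · refine Or.inr ⟨LM_add O hu1 (L_mem_LM O (Or.inl ⟨y', hy', rfl⟩)), ?_⟩
      have : (1/2:ℚ) • (1 + (u + 2 • y')) = (1/2:ℚ) • (1 + u) + y' := by
        rw [nat2smul]; module
      rw [this]; exact add_mem hu2 hy'.2
    · refine Or.inl ⟨(1/2:ℚ) • (1 + u) + ((1/2:ℚ) • (1 + v) - 1), ?_, ?_⟩
      · constructor
        · simp [hu1.1, hv1.1]
          norm_num
        · exact add_mem hu2 (sub_mem hv2 (one_mem O))
      · rw [nat2smul]; module

lemma L_zsmul (k : ℤ) {v : ℍ[ℚ,a,b]} (hv : v ∈ Lset a b O) : k • v ∈ Lset a b O := by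
  rcases hv with ⟨y, hy, rfl⟩ | ⟨hv1, hv2⟩
  · refine Or.inl ⟨k • y, LM_zsmul O k hy, ?_⟩
    rw [nat2smul, nat2smul, smul_comm]
  · rcases Int.even_or_odd k with ⟨j, hj⟩ | ⟨j, hj⟩
    · refine Or.inl ⟨j • v, LM_zsmul O j hv1, ?_⟩
      rw [nat2smul, hj, zsmul_eq_qsmul, zsmul_eq_qsmul]
      push_cast
      module
    · refine Or.inr ⟨LM_zsmul O k hv1, ?_⟩
      have : (1/2:ℚ) • (1 + k • v) = (1/2:ℚ) • (1 + v) + j • v := by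
        rw [hj, zsmul_eq_qsmul, zsmul_eq_qsmul]
        push_cast
        module
      rw [this]
      exact add_mem hv2 (zsmul_mem (L_mem_LM O (Or.inr ⟨hv1, hv2⟩)).2 j)

lemma den_dvd_two {x : ℍ[ℚ,a,b]} (hxP : IsPrimitiveIn a b (Lset a b O) x)
    {q : ℚ} (hqx : q • x ∈ LMset a b O) : ∃ m : ℤ, (m:ℚ) = 2*q := by
  set A : ℤ := Int.gcdA (2*q.num) (q.den) with hA
  set Bz : ℤ := Int.gcdB (2*q.num) (q.den) with hB
  set g : ℕ := Int.gcd (2*q.num) (q.den) with hg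
  have hbez : (g:ℤ) = (2*q.num) * A + (q.den) * Bz := Int.gcd_eq_gcd_ab _ _
  have hden0 : (q.den : ℚ) ≠ 0 := by exact_mod_cast q.den_nz
  have hgdvdden : (g:ℤ) ∣ (q.den:ℤ) := Int.gcd_dvd_right _ _
  have hgdvdnum : (g:ℤ) ∣ 2*q.num := Int.gcd_dvd_left _ _
  have hg0 : (g:ℤ) ≠ 0 := by
    intro h
    rw [hg] at h
    have h' : Int.gcd (2*q.num) (q.den) = 0 := by exact_mod_cast h
    have := (Int.gcd_eq_zero_iff.mp h').2
    exact (by exact_mod_cast q.den_nz : ((q.den:ℕ):ℤ) ≠ 0) this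
  set s : ℚ := (g:ℚ)/(q.den) with hs
  have hqnum : (q.num:ℚ) = q * q.den := by
    exact (div_eq_iff hden0).mp (Rat.num_div_den q)
  have hsval : s = (A:ℚ)*(2*q) + (Bz:ℚ) := by
    have h1 : ((g:ℕ):ℚ) = 2*(q.num:ℚ)*A + (q.den:ℚ)*Bz := by exact_mod_cast hbez
    rw [hqnum] at h1
    rw [hs, h1]
    field_simp
  have hsx : s • x ∈ Lset a b O := by
    have h2 : s • x = A • (2 • (q • x)) + Bz • x := by
      rw [hsval, zsmul_eq_qsmul, zsmul_eq_qsmul, nat2smul]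
      simp only [smul_smul, ← add_smul]
    rw [h2]
    exact L_add O (L_zsmul O A (Or.inl ⟨q • x, hqx, rfl⟩)) (L_zsmul O Bz hxP.1)
  set k : ℤ := (q.den:ℤ)/(g:ℤ) with hk
  have hkg : k * g = q.den := Int.ediv_mul_cancel hgdvdden
  have hx_eq : x = k • (s • x) := by
    rw [zsmul_eq_qsmul, smul_smul]
    have : (k:ℚ) * s = 1 := by
      rw [hs]
      have hkq : (k:ℚ) * (g:ℚ) = (q.den:ℚ) := by exact_mod_cast hkg
      field_simp
      linarith [hkq]
    rw [this, one_smul]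
  have hunit : IsUnit k := hxP.2 k (s • x) hsx hx_eq
  have hk1 : k = 1 := by
    rcases Int.isUnit_iff.mp hunit with h | h
    · exact h
    · exfalso
      rw [h] at hkg
      have hgpos : (0:ℤ) < g := lt_of_le_of_ne (Int.ofNat_nonneg g) (Ne.symm hg0)
      have : (0:ℤ) < q.den := by exact_mod_cast q.pos
      omega
  have hdeng : (q.den:ℤ) = g := by rw [← hkg, hk1, one_mul]
  have hdvd : (q.den:ℤ) ∣ 2*q.num := by rw [hdeng]; exact hgdvdnum
  obtain ⟨c, hc⟩ := hdvd
  refine ⟨c, ?_⟩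
  have h3 : 2 * (q.num:ℚ) = (q.den:ℚ) * c := by exact_mod_cast hc
  have h4 : (q.den:ℚ) * c = (q.den:ℚ) * (2*q) := by
    rw [← h3]; linear_combination 2*hqnum
  exact mul_left_cancel₀ hden0 h4

lemma star_eq (w : ℍ[ℚ,a,b]) : star w = ((2*w.re:ℚ)) • (1:ℍ[ℚ,a,b]) - w := by
  ext <;> simp <;> ring

lemma mem_SpanAlg {w : ℍ[ℚ,a,b]} {c d : ℤ} {hw2} {z : ℍ[ℚ,a,b]} :
    z ∈ SpanAlg w c d hw2 ↔ z ∈ Sset w := Iff.rfl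

lemma Qq_zero : Qq a b 0 = 0 := by simp [Qq]

lemma optimal_image (hRat : ∀ c : ℚ, c • (1:ℍ[ℚ,a,b]) ∈ O → ∃ m : ℤ, (m:ℚ) = c)
    (hTr : ∀ z ∈ O, ∃ t : ℤ, (t:ℚ) = 2*z.re)
    {D : ℤ} (hD : 0 < D) {x : ℍ[ℚ,a,b]}
    (hxP : IsPrimitiveIn a b (Lset a b O) x) (hxQ : Qq a b x = (D:ℚ))
    {w : ℍ[ℚ,a,b]} {c d : ℤ} (hw2 : w*w = (c:ℚ) • (1:ℍ[ℚ,a,b]) + (d:ℚ) • w) (hwO : w ∈ O)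
    (hwx : w = ((w.re:ℚ)) • (1:ℍ[ℚ,a,b]) + (1/2:ℚ) • x)
    (hcase : (w.re = 0 ∧ (∃ y ∈ LMset a b O, x = 2 • y)) ∨
      (w.re = (1/2:ℚ) ∧ ¬(∃ y ∈ LMset a b O, x = 2 • y))) :
    IsOptimalEmbImage a b O (SpanAlg w c d hw2) D := by
  have hxLM := L_mem_LM O hxP.1
  have hxre := hxLM.1
  have hxO := hxLM.2
  have hxx : x*x = (D:ℚ) • (1:ℍ[ℚ,a,b]) + (0:ℚ) • x := by
    rw [pure_sq hxre, hxQ]; simp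
  refine ⟨w, rfl, ?_, ?_, ?_⟩
  · -- discriminant
    have h1 : w * star w = (2*w.re:ℚ) • w - w*w := by
      rw [star_eq, mul_sub, mul_smul_comm, mul_one]
    have hww : w*w = (w.re*w.re + (1/2)*((1/2))*(D:ℚ)) • (1:ℍ[ℚ,a,b])
        + (w.re*(1/2)+(1/2)*w.re+(1/2)*(1/2)*0) • x := by
      conv_lhs => rw [hwx]
      exact span_mul hxx _ _ _ _
    have h3 := congrArg QuaternionAlgebra.re hww
    simp [hxre] at h3
    have h4 : (w * star w).re
        = w.re*w.re - a*w.imI*w.imI - b*w.imJ*w.imJ + a*b*w.imK*w.imK := by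
      simp [QuaternionAlgebra.re_mul]; ring
    rw [h4]
    linear_combination (4:ℚ)*h3
  · -- S ≤ O
    rintro z ⟨m, n, rfl⟩
    exact add_mem (zsmul_mem (one_mem O) m) (zsmul_mem hwO n)
  · -- optimality
    rintro z hzO ⟨p, q, hzpq⟩
    rw [mem_SpanAlg]
    by_cases hq : q = 0
    · rw [hq, zero_smul, add_zero] at hzpq
      obtain ⟨m, hm⟩ := hRat p (hzpq ▸ hzO)
      exact ⟨m, 0, by rw [hzpq, ← hm, zsmul_eq_qsmul]; simp⟩
    · have hzx : z = (p + q*w.re) • (1:ℍ[ℚ,a,b]) + (q/2) • x := by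
        rw [hzpq]; conv_lhs => rw [hwx]
        module
      have hzre : z.re = p + q*w.re := by
        rw [hzx]; simp [hxre]
      obtain ⟨t, ht⟩ := hTr z hzO
      have hstarO : star z ∈ O := by
        rw [star_eq z, ← ht, ← zsmul_eq_qsmul]
        exact sub_mem (zsmul_mem (one_mem O) t) hzO
      have hqx_eq : z - star z = q • x := by
        rw [star_eq z, hzre]
        conv_lhs => rw [hzx]
        module
      have hqxLM : q • x ∈ LMset a b O := by
        refine ⟨by simp [hxre], ?_⟩
        rw [← hqx_eq]; exact sub_mem hzO hstarO
      obtain ⟨m2, hm2⟩ := den_dvd_two O hxP hqxLM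
      rcases Int.even_or_odd m2 with ⟨j, hj⟩ | ⟨j, hj⟩
      · have hqj : (j:ℚ) = q := by rw [hj] at hm2; push_cast at hm2; linarith
        have hp1 : p • (1:ℍ[ℚ,a,b]) ∈ O := by
          have he : p • (1:ℍ[ℚ,a,b]) = z - j • w := by
            rw [hzpq, zsmul_eq_qsmul, hqj]; module
          rw [he]; exact sub_mem hzO (zsmul_mem hwO j)
        obtain ⟨m1, hm1⟩ := hRat p hp1
        exact ⟨m1, j, by rw [hzpq, zsmul_eq_qsmul, zsmul_eq_qsmul, hm1, hqj]⟩
      · exfalso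
        have hqj : q = (j:ℚ) + 1/2 := by rw [hj] at hm2; push_cast at hm2; linarith
        rcases hcase with ⟨hre0, hcond⟩ | ⟨hre12, hcond⟩
        · have hv : z - j • w = p • (1:ℍ[ℚ,a,b]) + (1/2:ℚ) • w := by
            rw [hzpq, zsmul_eq_qsmul, hqj]; module
          have hvO : p • (1:ℍ[ℚ,a,b]) + (1/2:ℚ) • w ∈ O :=
            hv ▸ sub_mem hzO (zsmul_mem hwO j)
          have htp : (t:ℚ) = 2*p := by rw [ht, hzre, hre0]; ring
          have hwLM : w ∈ LMset a b O := ⟨hre0, hwO⟩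
          have hxw : x = (2:ℤ) • w := by
            rw [zsmul_eq_qsmul]
            conv_lhs => rw [show x = (2:ℚ) • ((w.re:ℚ) • (1:ℍ[ℚ,a,b]) + (1/2:ℚ) • x) - (2*w.re:ℚ) • 1 by module]
            rw [← hwx, hre0]
            simp
          have hwL : w ∈ Lset a b O := by
            rcases Int.even_or_odd t with ⟨i, hi⟩ | ⟨i, hi⟩
            · have hpi : (i:ℚ) = p := by rw [hi] at htp; push_cast at htp; linarith
              have h12w : (1/2:ℚ) • w ∈ O := by
                have he : (1/2:ℚ) • w = (p • (1:ℍ[ℚ,a,b]) + (1/2:ℚ) • w) - i • 1 := by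
                  rw [zsmul_eq_qsmul, hpi]; module
                rw [he]; exact sub_mem hvO (zsmul_mem (one_mem O) i)
              refine Or.inl ⟨(1/2:ℚ) • w, ⟨by simp [hre0], h12w⟩, ?_⟩
              rw [nat2smul, smul_smul]; norm_num
            · have hpi : p = (i:ℚ) + 1/2 := by rw [hi] at htp; push_cast at htp; linarith
              have hhw : (1/2:ℚ) • (1+w) ∈ O := by
                have he : (1/2:ℚ) • (1+w) = (p • (1:ℍ[ℚ,a,b]) + (1/2:ℚ) • w) - i • 1 := by
                  rw [zsmul_eq_qsmul, hpi]; module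
                rw [he]; exact sub_mem hvO (zsmul_mem (one_mem O) i)
              exact Or.inr ⟨hwLM, hhw⟩
          have := hxP.2 2 w hwL hxw
          rw [Int.isUnit_iff] at this
          omega
        · apply hcond
          have h12x : (1/2:ℚ) • x ∈ LMset a b O := by
            have he : (1/2:ℚ) • x = q • x - j • x := by
              rw [zsmul_eq_qsmul, hqj]; module
            rw [he]; exact LM_sub O hqxLM (LM_zsmul O j hxLM)
          refine ⟨(1/2:ℚ) • x, h12x, ?_⟩
          rw [nat2smul, smul_smul]; norm_num

lemma Qq_of_sq {x : ℍ[ℚ,a,b]} (hre : x.re = 0) {r : ℚ} (h : x*x = r • (1:ℍ[ℚ,a,b])) :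
    Qq a b x = r := by
  have h2 : (Qq a b x) • (1:ℍ[ℚ,a,b]) = r • 1 := by rw [← pure_sq hre, h]
  have h3 := congrArg QuaternionAlgebra.re h2
  simpa using h3

lemma im_comb (α β : ℚ) (v : ℍ[ℚ,a,b]) :
    (α • (1:ℍ[ℚ,a,b]) + β • v).im = β • v.im := by ext <;> simp

lemma im_half {v : ℍ[ℚ,a,b]} (h : v.re = 0) : ((1/2:ℚ) • v).im = (1/2:ℚ) • v := by
  ext <;> simp [h]

lemma im_half' {v : ℍ[ℚ,a,b]} (h : v.re = 0) :
    ((1/2:ℚ) • (1+v)).im = (1/2:ℚ) • v := by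
  ext <;> simp [h]

lemma cond_neg {v : ℍ[ℚ,a,b]} (h : ∃ y ∈ LMset a b O, v = 2 • y) :
    ∃ y ∈ LMset a b O, -v = 2 • y := by
  obtain ⟨y, hy, rfl⟩ := h
  exact ⟨-y, ⟨by simp [hy.1], neg_mem hy.2⟩, by rw [nat2smul, nat2smul, smul_neg]⟩

-- the two branch constructions
lemma exF_A (hRat : ∀ c : ℚ, c • (1:ℍ[ℚ,a,b]) ∈ O → ∃ m : ℤ, (m:ℚ) = c)
    (hTr : ∀ z ∈ O, ∃ t : ℤ, (t:ℚ) = 2*z.re)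
    {D : ℤ} (hD : 0 < D) {x : ℍ[ℚ,a,b]}
    (hxP : IsPrimitiveIn a b (Lset a b O) x) (hxQ : Qq a b x = (D:ℚ))
    (hc : ∃ y ∈ LMset a b O, x = 2 • y) :
    ∃ S : Subalgebra ℤ ℍ[ℚ,a,b], IsOptimalEmbImage a b O S D ∧
      (S : Set ℍ[ℚ,a,b]) = Sset ((1/2:ℚ) • x) := by
  have hxLM := L_mem_LM O hxP.1
  have hxre := hxLM.1
  set w : ℍ[ℚ,a,b] := (1/2:ℚ) • x with hw
  have hwre : w.re = 0 := by rw [hw]; simp [hxre]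
  have hwO : w ∈ O := by
    obtain ⟨y, hy, hxy⟩ := hc
    have : w = y := by rw [hw, hxy, nat2smul, smul_smul]; norm_num
    rw [this]; exact hy.2
  have hxx : x*x = (D:ℚ) • (1:ℍ[ℚ,a,b]) + (0:ℚ) • x := by
    rw [pure_sq hxre, hxQ]; simp
  have hww : w*w = ((D:ℚ)/4) • (1:ℍ[ℚ,a,b]) := by
    rw [hw, smul_mul_assoc, mul_smul_comm, hxx]
    match_scalars <;> ring
  obtain ⟨e, he⟩ := hRat ((D:ℚ)/4) (by rw [← hww]; exact mul_mem hwO hwO)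
  have hw2 : w*w = (e:ℚ) • (1:ℍ[ℚ,a,b]) + ((0:ℤ):ℚ) • w := by
    rw [hww, he]; simp
  refine ⟨SpanAlg w e 0 hw2, ?_, rfl⟩
  refine optimal_image O hRat hTr hD hxP hxQ hw2 hwO ?_ (Or.inl ⟨hwre, hc⟩)
  rw [hwre, hw]; module

lemma exF_B (hRat : ∀ c : ℚ, c • (1:ℍ[ℚ,a,b]) ∈ O → ∃ m : ℤ, (m:ℚ) = c)
    (hTr : ∀ z ∈ O, ∃ t : ℤ, (t:ℚ) = 2*z.re)
    {D : ℤ} (hD : 0 < D) {x : ℍ[ℚ,a,b]}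
    (hxP : IsPrimitiveIn a b (Lset a b O) x) (hxQ : Qq a b x = (D:ℚ))
    (hc : ¬ ∃ y ∈ LMset a b O, x = 2 • y) :
    ∃ S : Subalgebra ℤ ℍ[ℚ,a,b], IsOptimalEmbImage a b O S D ∧
      (S : Set ℍ[ℚ,a,b]) = Sset ((1/2:ℚ) • (1+x)) := by
  have hxLM := L_mem_LM O hxP.1
  have hxre := hxLM.1
  have hx2 : (1/2:ℚ) • (1+x) ∈ O := by
    rcases hxP.1 with h | h
    · exact absurd h hc
    · exact h.2
  set w : ℍ[ℚ,a,b] := (1/2:ℚ) • (1+x) with hw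
  have hwre : w.re = 1/2 := by rw [hw]; simp [hxre]
  have hsplit : w = (1/2:ℚ) • (1:ℍ[ℚ,a,b]) + (1/2:ℚ) • x := by rw [hw]; module
  have hxx : x*x = (D:ℚ) • (1:ℍ[ℚ,a,b]) + (0:ℚ) • x := by
    rw [pure_sq hxre, hxQ]; simp
  have hww : w*w = (((D:ℚ)-1)/4) • (1:ℍ[ℚ,a,b]) + (1:ℚ) • w := by
    conv_lhs => rw [hsplit, span_mul hxx]
    rw [hsplit]
    match_scalars <;> ring
  obtain ⟨e, he⟩ := hRat (((D:ℚ)-1)/4) (by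
    have : (((D:ℚ)-1)/4) • (1:ℍ[ℚ,a,b]) = w*w - w := by rw [hww]; module
    rw [this]; exact sub_mem (mul_mem hx2 hx2) hx2)
  have hw2 : w*w = (e:ℚ) • (1:ℍ[ℚ,a,b]) + ((1:ℤ):ℚ) • w := by
    rw [hww, he]; norm_num
  refine ⟨SpanAlg w e 1 hw2, ?_, rfl⟩
  refine optimal_image O hRat hTr hD hxP hxQ hw2 hx2 ?_ (Or.inr ⟨hwre, hc⟩)
  rw [hwre, hsplit]

lemma surj_pre (hRat : ∀ c : ℚ, c • (1:ℍ[ℚ,a,b]) ∈ O → ∃ m : ℤ, (m:ℚ) = c)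
    (hTr : ∀ z ∈ O, ∃ t : ℤ, (t:ℚ) = 2*z.re)
    {D : ℤ} (hD : 0 < D) {S : Subalgebra ℤ ℍ[ℚ,a,b]} (hS : IsOptimalEmbImage a b O S D) :
    ∃ x : ℍ[ℚ,a,b], IsPrimitiveIn a b (Lset a b O) x ∧ Qq a b x = (D:ℚ) ∧
      ((∃ y ∈ LMset a b O, x = 2 • y) → (S : Set ℍ[ℚ,a,b]) = Sset ((1/2:ℚ) • x)) ∧
      (¬(∃ y ∈ LMset a b O, x = 2 • y) →
        (S : Set ℍ[ℚ,a,b]) = Sset ((1/2:ℚ) • (1+x))) := by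
  obtain ⟨w, hcar, hdisc, hSO, hopt⟩ := hS
  have hwS : w ∈ (S : Set ℍ[ℚ,a,b]) := by rw [hcar]; exact ⟨0, 1, by simp⟩
  have hwO : w ∈ O := hSO hwS
  have him : w.im ≠ 0 := by
    intro h0
    have hI : w.imI = 0 := by have := congrArg QuaternionAlgebra.imI h0; simpa using this
    have hJ : w.imJ = 0 := by have := congrArg QuaternionAlgebra.imJ h0; simpa using this
    have hK : w.imK = 0 := by have := congrArg QuaternionAlgebra.imK h0; simpa using this
    have hsc : (w * star w).re = w.re * w.re := by
      simp [QuaternionAlgebra.re_mul, hI, hJ, hK]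
    rw [hsc] at hdisc
    have : (D:ℚ) = 0 := by linear_combination -hdisc
    have : D = 0 := by exact_mod_cast this
    omega
  obtain ⟨t, ht⟩ := hTr w hwO
  set x : ℍ[ℚ,a,b] := (2:ℚ) • w - (t:ℚ) • 1 with hx
  have hxO : x ∈ O := by
    rw [hx, show (2:ℚ) • w = (2:ℤ) • w from (zsmul_eq_qsmul 2 w).symm,
      show (t:ℚ) • (1:ℍ[ℚ,a,b]) = t • 1 from (zsmul_eq_qsmul t 1).symm]
    exact sub_mem (zsmul_mem hwO 2) (zsmul_mem (one_mem O) t)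
  have hxre : x.re = 0 := by rw [hx]; simp; linarith [ht]
  have hx_im : x.im = (2:ℚ) • w.im := by rw [hx]; ext <;> simp
  have hN : w*w = ((2*w.re:ℚ)) • w - ((w*star w).re) • (1:ℍ[ℚ,a,b]) := by
    linear_combination (norm := module) quat_identity w
  have hxx : x*x = (D:ℚ) • (1:ℍ[ℚ,a,b]) := by
    have hexp : x*x = (4:ℚ) • (w*w) - (4*(t:ℚ)) • w + ((t:ℚ)*(t:ℚ)) • (1:ℍ[ℚ,a,b]) := by
      rw [hx]
      simp only [sub_mul, mul_sub, smul_mul_assoc, mul_smul_comm, mul_one, one_mul, smul_smul]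
      module
    have hD4 : (t:ℚ)*(t:ℚ) - 4*((w*star w).re) = (D:ℚ) := by
      rw [ht]; linear_combination hdisc
    rw [hexp, hN, ← ht]
    match_scalars <;> linarith [hD4]
  have hxQ : Qq a b x = (D:ℚ) := Qq_of_sq hxre hxx
  -- primitivity
  have keyimp : ∀ (e : ℍ[ℚ,a,b]) (α : ℚ) (k : ℤ), k ≠ 0 → e ∈ O →
      e = α • (1:ℍ[ℚ,a,b]) + ((k:ℚ))⁻¹ • w → IsUnit k := by
    intro e α k hk0 heO heq
    have heS : e ∈ S := hopt e heO ⟨α, (k:ℚ)⁻¹, heq⟩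
    have heS' : e ∈ (S : Set ℍ[ℚ,a,b]) := heS
    rw [hcar] at heS'
    obtain ⟨m, n, hmn⟩ := heS'
    have h1 : e.im = (k:ℚ)⁻¹ • w.im := by rw [heq]; exact im_comb _ _ _
    have h2 : e.im = (n:ℚ) • w.im := by
      rw [hmn, zsmul_eq_qsmul, zsmul_eq_qsmul]; exact im_comb _ _ _
    have h3 : ((k:ℚ)⁻¹ - (n:ℚ)) • w.im = 0 := by
      rw [sub_smul, ← h1, ← h2, sub_self]
    have h4 : (k:ℚ)⁻¹ = (n:ℚ) := by
      rcases smul_eq_zero.mp h3 with h | h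
      · linarith [h]
      · exact absurd h him
    have hkQ : (k:ℚ) ≠ 0 := Int.cast_ne_zero.mpr hk0
    have h5 : k * n = 1 := by
      have : (k:ℚ) * (n:ℚ) = 1 := by rw [← h4]; field_simp
      exact_mod_cast this
    exact IsUnit.of_mul_eq_one n h5
  have hxprim : ∀ (k : ℤ), ∀ v ∈ Lset a b O, x = k • v → IsUnit k := by
    intro k v hvL hkv
    have hk0 : k ≠ 0 := by
      rintro rfl
      rw [zero_smul] at hkv
      have : x.im = 0 := by rw [hkv]; rfl
      rw [hx_im] at this
      exact him (by
        rcases smul_eq_zero.mp this with h | h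
        · norm_num at h
        · exact h)
    have hkQ : (k:ℚ) ≠ 0 := Int.cast_ne_zero.mpr hk0
    have hv_eq : v = (k:ℚ)⁻¹ • x := by
      rw [hkv, zsmul_eq_qsmul, smul_smul, inv_mul_cancel₀ hkQ, one_smul]
    rcases hvL with ⟨y, hy, hveq⟩ | ⟨hvLM, hv2⟩
    · have hy_eq : y = ((1:ℚ)/2) • v := by
        rw [hveq, nat2smul, smul_smul]; norm_num
      refine keyimp y (-(t:ℚ)/(2*(k:ℚ))) k hk0 hy.2 ?_
      rw [hy_eq, hv_eq, hx]
      match_scalars <;> (field_simp; try ring)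
    · refine keyimp ((1/2:ℚ) • (1+v)) (1/2 - (t:ℚ)/(2*(k:ℚ))) k hk0 hv2 ?_
      rw [hv_eq, hx]
      match_scalars <;> (field_simp; try ring)
  rcases Int.even_or_odd t with ⟨i, hi⟩ | ⟨i, hi⟩
  · -- even trace
    have hwrei : w.re = (i:ℚ) := by
      have : (t:ℚ) = (i:ℚ) + (i:ℚ) := by exact_mod_cast congrArg (fun r : ℤ => (r:ℚ)) hi
      linarith [ht, this]
    have hy0 : w - i • (1:ℍ[ℚ,a,b]) ∈ LMset a b O := by
      refine ⟨?_, sub_mem hwO (zsmul_mem (one_mem O) i)⟩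
      rw [zsmul_eq_qsmul]; simp [hwrei]
    have hcond : ∃ y ∈ LMset a b O, x = 2 • y := by
      refine ⟨w - i • 1, hy0, ?_⟩
      rw [nat2smul, hx, zsmul_eq_qsmul, show (t:ℚ) = 2*(i:ℚ) by push_cast [hi]; ring]
      module
    have hxL : x ∈ Lset a b O := Or.inl hcond
    refine ⟨x, ⟨hxL, hxprim⟩, hxQ, fun _ => ?_, fun h => absurd hcond h⟩
    rw [hcar]
    rw [show (1/2:ℚ) • x = (-i) • (1:ℍ[ℚ,a,b]) + w by
      rw [hx, zsmul_eq_qsmul, show (t:ℚ) = 2*(i:ℚ) by push_cast [hi]; ring]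
      push_cast
      module]
    rw [Sset_shift]
    rfl
  · -- odd trace
    have hncond : ¬ ∃ y ∈ LMset a b O, x = 2 • y := by
      rintro ⟨y, hy, hxy⟩
      have hy_eq : y = (1/2:ℚ) • x := by
        rw [hxy, nat2smul, smul_smul]; norm_num
      have h12O : (1/2:ℚ) • x ∈ O := hy_eq ▸ hy.2
      have hhalf : ((t:ℚ)/2) • (1:ℍ[ℚ,a,b]) ∈ O := by
        have he : ((t:ℚ)/2) • (1:ℍ[ℚ,a,b]) = w - (1/2:ℚ) • x := by
          rw [hx]; module
        rw [he]; exact sub_mem hwO h12O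
      obtain ⟨m, hm⟩ := hRat _ hhalf
      have : 2*m = t := by
        have : (2*m : ℚ) = (t:ℚ) := by push_cast; linarith [hm]
        exact_mod_cast this
      omega
    have hxL : x ∈ Lset a b O := by
      refine Or.inr ⟨⟨hxre, hxO⟩, ?_⟩
      have he : (1/2:ℚ) • (1+x) = w + (-i) • (1:ℍ[ℚ,a,b]) := by
        rw [hx, zsmul_eq_qsmul, show (t:ℚ) = 2*(i:ℚ)+1 by push_cast [hi]; ring]
        push_cast
        module
      rw [he]
      exact add_mem hwO (zsmul_mem (one_mem O) (-i))
    refine ⟨x, ⟨hxL, hxprim⟩, hxQ, fun h => absurd h hncond, fun _ => ?_⟩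
    rw [hcar]
    rw [show (1/2:ℚ) • (1+x) = (-i) • (1:ℍ[ℚ,a,b]) + w by
      rw [hx, zsmul_eq_qsmul, show (t:ℚ) = 2*(i:ℚ)+1 by push_cast [hi]; ring]
      push_cast
      module]
    rw [Sset_shift]
    rfl

end Aux

/-- Bijection between primitive vectors `x ∈ L/{±1}` of length `Q(x) = D > 0` and (images of)
optimal embeddings `φ : 𝒪_D → 𝒪_𝔐` of the real quadratic order of discriminant `D`, up to
Galois conjugation (an embedding up to Galois conjugation is identified with its image):
the map sends `x` to `ℤ⟨1, (1+x)/2⟩` if `x ∉ 2L_𝔐` and to `ℤ⟨1, x/2⟩` if `x ∈ 2L_𝔐`;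
it is surjective and two primitive vectors have the same image iff they agree up to sign. -/
theorem stmt11 (a b : ℚ) (hindef : 0 < a ∨ 0 < b)
    (hdiv : ∀ x : ℍ[ℚ, a, b], x ≠ 0 → IsUnit x)
    (O : Subalgebra ℤ ℍ[ℚ, a, b]) (hO : IsEichlerOrder a b O)
    (D : ℤ) (hD : 0 < D) :
    ∃ F : {x : ℍ[ℚ, a, b] // IsPrimitiveIn a b (Lset a b O) x ∧ Qq a b x = (D : ℚ)} →
          {S : Subalgebra ℤ ℍ[ℚ, a, b] // IsOptimalEmbImage a b O S D},
      Function.Surjective F ∧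
      (∀ x y, F x = F y ↔ (x.1 = y.1 ∨ x.1 = -y.1)) ∧
      (∀ x, (∃ y ∈ LMset a b O, x.1 = 2 • y) →
        ((F x : Subalgebra ℤ ℍ[ℚ, a, b]) : Set ℍ[ℚ, a, b]) =
          {z | ∃ m n : ℤ, z = m • (1 : ℍ[ℚ, a, b]) + n • ((1 / 2 : ℚ) • x.1)}) ∧
      (∀ x, ¬(∃ y ∈ LMset a b O, x.1 = 2 • y) →
        ((F x : Subalgebra ℤ ℍ[ℚ, a, b]) : Set ℍ[ℚ, a, b]) =
          {z | ∃ m n : ℤ, z = m • (1 : ℍ[ℚ, a, b]) + n • ((1 / 2 : ℚ) • (1 + x.1))}) := by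
  classical
  obtain ⟨O₁, O₂, hO₁, hO₂, hOeq⟩ := hO
  have hOle : O ≤ O₁ := by rw [hOeq]; exact inf_le_left
  have hFG : (Subalgebra.toSubmodule O₁).FG := hO₁.1.1
  have hRat : ∀ c : ℚ, c • (1:ℍ[ℚ,a,b]) ∈ O → ∃ m : ℤ, (m:ℚ) = c := by
    intro c hc
    exact rat_int hFG (by rw [Algebra.algebraMap_eq_smul_one]; exact hOle hc)
  have hTr : ∀ z ∈ O, ∃ t : ℤ, (t:ℚ) = 2*z.re := by
    intro z hz
    by_cases him : z.im = 0
    · have hI : z.imI = 0 := by have := congrArg QuaternionAlgebra.imI him; simpa using this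
      have hJ : z.imJ = 0 := by have := congrArg QuaternionAlgebra.imJ him; simpa using this
      have hK : z.imK = 0 := by have := congrArg QuaternionAlgebra.imK him; simpa using this
      have hz1 : z = z.re • (1:ℍ[ℚ,a,b]) := by ext <;> simp [hI, hJ, hK]
      obtain ⟨m, hm⟩ := hRat z.re (by rw [← hz1]; exact hz)
      exact ⟨2*m, by push_cast; linarith [hm]⟩
    · exact (trace_norm_int hFG (hOle hz) him).1
  have exF : ∀ x : {x : ℍ[ℚ,a,b] // IsPrimitiveIn a b (Lset a b O) x ∧ Qq a b x = (D:ℚ)},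
      ∃ S : {S : Subalgebra ℤ ℍ[ℚ,a,b] // IsOptimalEmbImage a b O S D},
        ((∃ y ∈ LMset a b O, x.1 = 2 • y) →
          ((S.1 : Set ℍ[ℚ,a,b]) = Sset ((1/2:ℚ) • x.1))) ∧
        (¬(∃ y ∈ LMset a b O, x.1 = 2 • y) →
          ((S.1 : Set ℍ[ℚ,a,b]) = Sset ((1/2:ℚ) • (1+x.1)))) := by
    intro x
    by_cases hc : ∃ y ∈ LMset a b O, x.1 = 2 • y
    · obtain ⟨S, hS, hcarr⟩ := exF_A O hRat hTr hD x.2.1 x.2.2 hc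
      exact ⟨⟨S, hS⟩, fun _ => hcarr, fun h => absurd hc h⟩
    · obtain ⟨S, hS, hcarr⟩ := exF_B O hRat hTr hD x.2.1 x.2.2 hc
      exact ⟨⟨S, hS⟩, fun h => absurd h hc, fun _ => hcarr⟩
  choose F hF1 hF2 using exF
  have key : ∀ x, ∃ wx : ℍ[ℚ,a,b],
      ((F x).1 : Set ℍ[ℚ,a,b]) = Sset wx ∧ wx.im = (1/2:ℚ) • x.1 := by
    intro x
    have hxre : x.1.re = 0 := (L_mem_LM O x.2.1.1).1
    by_cases hc : ∃ y ∈ LMset a b O, x.1 = 2 • y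
    · exact ⟨_, hF1 x hc, im_half hxre⟩
    · exact ⟨_, hF2 x hc, im_half' hxre⟩
  refine ⟨F, ?_, ?_, ?_, ?_⟩
  · rintro ⟨S, hS⟩
    obtain ⟨x, hxP, hxQ, hA, hB⟩ := surj_pre O hRat hTr hD hS
    refine ⟨⟨x, hxP, hxQ⟩, ?_⟩
    apply Subtype.ext
    apply SetLike.coe_injective
    by_cases hc : ∃ y ∈ LMset a b O, x = 2 • y
    · rw [hF1 _ hc, hA hc]
    · rw [hF2 _ hc, hB hc]
  · intro x y
    constructor
    · intro hxy
      obtain ⟨wx, hwx, hwxim⟩ := key x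
      obtain ⟨wy, hwy, hwyim⟩ := key y
      have hss : Sset wx = Sset wy := by rw [← hwx, ← hwy, hxy]
      have hmem : wy ∈ Sset wx := by rw [hss]; exact ⟨0, 1, by simp⟩
      obtain ⟨m, n, hmn⟩ := hmem
      have him : wy.im = (n:ℚ) • wx.im := by
        rw [hmn, zsmul_eq_qsmul, zsmul_eq_qsmul]; exact im_comb _ _ _
      rw [hwxim, hwyim] at him
      have h2 : y.1 = (n:ℚ) • x.1 := by
        have h3 := congrArg (fun v => (2:ℚ) • v) him
        simp only [smul_smul] at h3
        norm_num at h3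
        convert h3 using 2
        ring
      have hyx : y.1 = n • x.1 := by rw [zsmul_eq_qsmul]; exact h2
      have hu := y.2.1.2 n x.1 x.2.1.1 hyx
      rcases Int.isUnit_iff.mp hu with h | h
      · left; rw [hyx, h, one_smul]
      · right; rw [hyx, h]; simp
    · rintro (h | h)
      · exact congrArg F (Subtype.ext h)
      · apply Subtype.ext; apply SetLike.coe_injective
        by_cases hc : ∃ y0 ∈ LMset a b O, y.1 = 2 • y0
        · have hcx : ∃ y0 ∈ LMset a b O, x.1 = 2 • y0 := by
            rw [h]; exact cond_neg O hc
          rw [hF1 x hcx, hF1 y hc, h]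
          rw [show (1/2:ℚ) • (-y.1) = -((1/2:ℚ) • y.1) from smul_neg _ _, Sset_neg]
        · have hcx : ¬∃ y0 ∈ LMset a b O, x.1 = 2 • y0 := by
            intro hcc
            apply hc
            have h2 := cond_neg O hcc
            rw [h, neg_neg] at h2
            exact h2
          rw [hF2 x hcx, hF2 y hc]
          rw [show (1/2:ℚ) • (1+x.1) = (1:ℤ) • (1:ℍ[ℚ,a,b]) + -((1/2:ℚ) • (1+y.1)) from by
            rw [h, zsmul_eq_qsmul]; push_cast; module]
          rw [Sset_shift, Sset_neg]
  · intro x hc; exact hF1 x hc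
  · intro x hc; exact hF2 x hc
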